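/- arXiv:math/0201192 — 5 statements merged into one kernel-verified Lean document; each statement's English description precedes it below -/
import Mathlib

section
/- Let G be a finite-dimensional Lie group acting smoothly and properly on a finite-dimensional Hausdorff second-countable smooth manifold M without boundary. If x, y ∈ M are such that f(x) = f(y) for every smooth G-invariant function f : M → ℝ, then y lies in the G-orbit of x, i.e. there exists g ∈ G with g·x = y. In other words, the smooth G-invariant functions separate the G-orbits. -/
open scoped Manifold Topology
open Set Function Filter MeasureTheory Metric

universe u

section Aux

variable {𝔼 : Type*} [NormedAddCommGroup 𝔼] [NormedSpace ℝ 𝔼]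
  {𝓗 : Type*} [TopologicalSpace 𝓗] {I : ModelWithCorners ℝ 𝔼 𝓗}
  {N : Type*} [TopologicalSpace N] [ChartedSpace 𝓗 N] [IsManifold I (⊤ : ℕ∞) N]
  [T2Space N] [MeasurableSpace N] [OpensMeasurableSpace N]
  {μ : MeasureTheory.Measure N} [IsFiniteMeasureOnCompacts μ]
  {E' : Type u} [NormedAddCommGroup E'] [NormedSpace ℝ E'] [FiniteDimensional ℝ E']

theorem aux_cont_section {W : Type*} [NormedAddCommGroup W]
    {φ : N → E' → W} {s : Set E'} (hs : IsOpen s)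
    (hφ : ContinuousOn (uncurry φ) (univ ×ˢ s)) {u : E'} (hu : u ∈ s) :
    Continuous fun a => φ a u := by
  rw [continuous_iff_continuousAt]
  intro a
  have h1 : ContinuousAt (uncurry φ) (a, u) :=
    hφ.continuousAt ((isOpen_univ.prod hs).mem_nhds (by simp [hu]))
  have h2 : Continuous fun b : N => (b, u) := continuous_id.prodMk continuous_const
  have h3 : Filter.Tendsto (fun b : N => (b, u)) (𝓝 a) (𝓝 (a, u)) := h2.continuousAt
  exact Filter.Tendsto.comp h1 h3

theorem aux_integrable_section {W : Type*} [NormedAddCommGroup W]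
    {φ : N → E' → W} {s : Set E'} {K : Set N} (hs : IsOpen s) (hK : IsCompact K)
    (hφ : ContinuousOn (uncurry φ) (univ ×ˢ s))
    (hφK : ∀ a ∉ K, ∀ u ∈ s, φ a u = 0) {u : E'} (hu : u ∈ s) :
    Integrable (fun a => φ a u) μ :=
  (aux_cont_section hs hφ hu).integrable_of_hasCompactSupport
    (HasCompactSupport.intro hK fun a ha => hφK a ha u hu)

theorem aux_section_contMDiffOn {W : Type*} [NormedAddCommGroup W] [NormedSpace ℝ W] {n : ℕ∞}
    {φ : N → E' → W} {s : Set E'}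
    (hφ : ContMDiffOn (I.prod 𝓘(ℝ, E')) 𝓘(ℝ, W) n (uncurry φ) (univ ×ˢ s)) (a : N) :
    ContDiffOn ℝ n (φ a) s := by
  have h2 : ContMDiffOn 𝓘(ℝ, E') (I.prod 𝓘(ℝ, E')) n (fun u : E' => ((a, u) : N × E')) s :=
    (contMDiff_const.prodMk contMDiff_id).contMDiffOn
  exact (hφ.comp h2 fun u hu => ⟨mem_univ _, hu⟩).contDiffOn

theorem aux_contDiffOn_integral (n : ℕ) :
    ∀ {W : Type u} [NormedAddCommGroup W] [NormedSpace ℝ W] [CompleteSpace W]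
      {F : N → E' → W} {s : Set E'} {K : Set N}, IsOpen s → IsCompact K →
      ContMDiffOn (I.prod 𝓘(ℝ, E')) 𝓘(ℝ, W) n (uncurry F) (univ ×ˢ s) →
      (∀ a ∉ K, ∀ u ∈ s, F a u = 0) →
      ContDiffOn ℝ n (fun u => ∫ a, F a u ∂μ) s := by
  induction n with
  | zero =>
    intro W _ _ _ F s K hs hK hF hFK
    rw [show ((0 : ℕ) : WithTop ℕ∞) = 0 from rfl, contDiffOn_zero]
    intro u₀ hu₀
    refine ContinuousAt.continuousWithinAt ?_
    obtain ⟨ε, hε, hball⟩ := (Metric.nhds_basis_closedBall.mem_iff).1 (hs.mem_nhds hu₀)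
    obtain ⟨C, hC⟩ := (hK.prod (isCompact_closedBall u₀ ε)).exists_bound_of_continuousOn
      (hF.continuousOn.mono (prod_mono (subset_univ K) hball))
    apply continuousAt_of_dominated (F := fun u a => F a u) (bound := K.indicator fun _ => C)
    · filter_upwards [hs.mem_nhds hu₀] with u hu
      exact (aux_integrable_section hs hK hF.continuousOn hFK hu).aestronglyMeasurable
    · filter_upwards [inter_mem (hs.mem_nhds hu₀) (Metric.closedBall_mem_nhds u₀ hε)] with u hu
      refine Eventually.of_forall fun a => ?_
      by_cases ha : a ∈ K
      · rw [indicator_of_mem ha]; exact hC (a, u) ⟨ha, hu.2⟩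
      · rw [indicator_of_notMem ha, hFK a ha u hu.1, norm_zero]
    · rw [integrable_indicator_iff hK.isClosed.measurableSet]
      exact integrableOn_const hK.measure_lt_top.ne
    · refine Eventually.of_forall fun a => ?_
      have h := (aux_section_contMDiffOn (n := 0) hF a).continuousOn
      exact h.continuousAt (hs.mem_nhds hu₀)
  | succ k IH =>
    intro W _ _ _ F s K hs hK hF hFK
    set F' : N → E' → (E' →L[ℝ] W) := fun a u => fderiv ℝ (F a) u with hF'
    have hFK' : ∀ a ∉ K, ∀ u ∈ s, F' a u = 0 := by
      intro a ha u hu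
      have h0 : F a =ᶠ[𝓝 u] fun _ => (0 : W) :=
        eventually_of_mem (hs.mem_nhds hu) fun v hv => hFK a ha v hv
      rw [hF']
      simp only
      rw [h0.fderiv_eq]
      exact fderiv_const_apply 0
    have hsm' : ContMDiffOn (I.prod 𝓘(ℝ, E')) 𝓘(ℝ, E' →L[ℝ] W) k (uncurry F') (univ ×ˢ s) := by
      intro p hp
      have hf : ContMDiffAt ((I.prod 𝓘(ℝ, E')).prod 𝓘(ℝ, E')) 𝓘(ℝ, W) (((k+1:ℕ)):ℕ∞)
          (uncurry fun (q : N × E') v => F q.1 v) (p, p.2) := by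
        have heq : (uncurry fun (q : N × E') v => F q.1 v)
            = (uncurry F) ∘ (fun q : (N × E') × E' => (q.1.1, q.2)) := rfl
        rw [heq]
        have h1 : ContMDiffAt (I.prod 𝓘(ℝ, E')) 𝓘(ℝ, W) (((k+1:ℕ)):ℕ∞) (uncurry F) p :=
          hF.contMDiffAt ((isOpen_univ.prod hs).mem_nhds ⟨trivial, hp.2⟩)
        exact h1.comp (p, p.2)
          ((contMDiff_fst.comp contMDiff_fst).prodMk contMDiff_snd).contMDiffAt
      have hres := ContMDiffAt.mfderiv (m := (k:ℕ∞)) (fun (q : N × E') v => F q.1 v) Prod.snd hf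
        contMDiff_snd.contMDiffAt (by exact_mod_cast le_refl (k+1))
      erw [inTangentCoordinates_model_space] at hres
      have heq2 : (fun q : N × E' => mfderiv 𝓘(ℝ, E') 𝓘(ℝ, W) (F q.1) q.2) = uncurry F' := by
        funext q; exact mfderiv_eq_fderiv
      rw [heq2] at hres
      exact hres.contMDiffWithinAt
    have key : ∀ u₀ ∈ s, HasFDerivAt (fun u => ∫ a, F a u ∂μ) (∫ a, F' a u₀ ∂μ) u₀ := by
      intro u₀ hu₀
      obtain ⟨ε, hε, hball⟩ := (Metric.nhds_basis_closedBall.mem_iff).1 (hs.mem_nhds hu₀)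
      obtain ⟨C, hC⟩ := (hK.prod (isCompact_closedBall u₀ ε)).exists_bound_of_continuousOn
        (hsm'.continuousOn.mono (prod_mono (subset_univ K) hball))
      apply hasFDerivAt_integral_of_dominated_of_fderiv_le (F := fun u a => F a u) (F' := fun u a => F' a u) (bound := K.indicator fun _ => C) (Metric.ball_mem_nhds u₀ hε)
      · filter_upwards [hs.mem_nhds hu₀] with u hu
        exact (aux_integrable_section hs hK hF.continuousOn hFK hu).aestronglyMeasurable
      · exact aux_integrable_section hs hK hF.continuousOn hFK hu₀
      · exact (aux_integrable_section hs hK hsm'.continuousOn hFK' hu₀).aestronglyMeasurable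
      · refine Eventually.of_forall fun a u hu => ?_
        by_cases ha : a ∈ K
        · rw [indicator_of_mem ha]; exact hC (a, u) ⟨ha, ball_subset_closedBall hu⟩
        · rw [indicator_of_notMem ha, hFK' a ha u (hball (ball_subset_closedBall hu)), norm_zero]
      · rw [integrable_indicator_iff hK.isClosed.measurableSet]
        exact integrableOn_const hK.measure_lt_top.ne
      · refine Eventually.of_forall fun a u hu => ?_
        have hd : ContDiffOn ℝ (((k+1:ℕ)):ℕ∞) (F a) s := aux_section_contMDiffOn hF a
        have hu' : u ∈ s := hball (ball_subset_closedBall hu)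
        exact ((hd.differentiableOn (by simp)).differentiableAt
          (hs.mem_nhds hu')).hasFDerivAt
    have hIH := IH hs hK hsm' hFK'
    rw [show ((k + 1 : ℕ) : WithTop ℕ∞) = (k : WithTop ℕ∞) + 1 by push_cast; ring,
      contDiffOn_succ_iff_fderiv_of_isOpen hs]
    refine ⟨fun u hu => ((key u hu).differentiableAt).differentiableWithinAt, by simp, ?_⟩
    exact hIH.congr fun u hu => (key u hu).fderiv


theorem aux_contDiffOn_integral_real (n : ℕ)
    {F : N → E' → ℝ} {s : Set E'} {K : Set N} (hs : IsOpen s) (hK : IsCompact K)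
    (hF : ContMDiffOn (I.prod 𝓘(ℝ, E')) 𝓘(ℝ, ℝ) (n : ℕ∞) (uncurry F) (univ ×ˢ s))
    (hFK : ∀ a ∉ K, ∀ u ∈ s, F a u = 0) :
    ContDiffOn ℝ n (fun u => ∫ a, F a u ∂μ) s := by
  let e : ULift.{u} ℝ ≃L[ℝ] ℝ := ContinuousLinearEquiv.ulift
  have hup : ContMDiffOn (I.prod 𝓘(ℝ, E')) 𝓘(ℝ, ULift.{u} ℝ) (n : ℕ∞)
      (uncurry fun (a : N) (u : E') => e.symm (F a u)) (univ ×ˢ s) := by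
    intro p hp
    exact ((e.symm : ℝ →L[ℝ] ULift.{u} ℝ).contDiff).comp_contMDiffWithinAt (hF p hp)
  have h1 := aux_contDiffOn_integral (μ := μ) n hs hK hup
    (fun a ha u hu => by simp [hFK a ha u hu])
  have h2 : ContDiffOn ℝ n (fun u => e (∫ a, e.symm (F a u) ∂μ)) s :=
    (e : ULift.{u} ℝ →L[ℝ] ℝ).contDiff.comp_contDiffOn h1
  refine h2.congr fun u hu => ?_
  have hint : Integrable (fun a => F a u) μ :=
    aux_integrable_section hs hK hF.continuousOn hFK hu
  have h3 : ∫ a, (e.symm : ℝ →L[ℝ] ULift.{u} ℝ) (F a u) ∂μ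
      = (e.symm : ℝ →L[ℝ] ULift.{u} ℝ) (∫ a, F a u ∂μ) :=
    ContinuousLinearMap.integral_comp_comm _ hint
  simp only [ContinuousLinearEquiv.coe_coe] at h3
  rw [h3]
  simp

end Aux


set_option linter.unusedSectionVars false in
/-- If a finite-dimensional Lie group `G` acts smoothly and properly on a
finite-dimensional Hausdorff second-countable boundaryless manifold `M`, then the smooth
`G`-invariant functions separate the `G`-orbits: if `x, y ∈ M` have the same value under
every smooth `G`-invariant function `f : M → ℝ`, then `y` lies in the `G`-orbit of `x`. -/
theorem invariant_functions_separate_orbits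
    {E : Type*} [NormedAddCommGroup E] [NormedSpace ℝ E] [FiniteDimensional ℝ E]
    {H : Type*} [TopologicalSpace H] {I : ModelWithCorners ℝ E H} [I.Boundaryless]
    {G : Type*} [TopologicalSpace G] [ChartedSpace H G] [Group G] [LieGroup I (⊤ : ℕ∞) G]
    {E' : Type*} [NormedAddCommGroup E'] [NormedSpace ℝ E'] [FiniteDimensional ℝ E']
    {H' : Type*} [TopologicalSpace H'] {J : ModelWithCorners ℝ E' H'} [J.Boundaryless]
    {M : Type*} [TopologicalSpace M] [T2Space M] [SecondCountableTopology M]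
    [ChartedSpace H' M] [IsManifold J (⊤ : ℕ∞) M]
    [MulAction G M]
    (hsmooth : ContMDiff (I.prod J) J (⊤ : ℕ∞) (fun p : G × M => p.1 • p.2))
    (hproper : IsProperMap (fun p : G × M => (p.1 • p.2, p.2)))
    (x y : M)
    (hxy : ∀ f : M → ℝ, ContMDiff J 𝓘(ℝ, ℝ) (⊤ : ℕ∞) f →
      (∀ (g : G) (z : M), f (g • z) = f z) → f x = f y) :
    ∃ g : G, g • x = y := by
  by_contra hcon
  -- topological instances on `G`
  haveI : IsTopologicalGroup G := topologicalGroup_of_lieGroup (I := I) (⊤ : ℕ∞)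
  haveI : T1Space G := I.t1Space G
  haveI : T2Space G := IsTopologicalGroup.t2Space_iff_one_closed.mpr isClosed_singleton
  haveI : LocallyCompactSpace H := I.locallyCompactSpace
  haveI : LocallyCompactSpace G := ChartedSpace.locallyCompactSpace H G
  haveI : LocallyCompactSpace H' := J.locallyCompactSpace
  haveI : LocallyCompactSpace M := ChartedSpace.locallyCompactSpace H' M
  borelize G
  have hcontAct : Continuous fun p : G × M => p.1 • p.2 := hsmooth.continuous
  -- the orbit of `y` is closed and does not contain `x`
  have horb : IsClosed (MulAction.orbit G y) := by
    have h1 : IsClosed ((univ : Set G) ×ˢ ({y} : Set M)) :=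
      isClosed_univ.prod isClosed_singleton
    have h2 := hproper.isClosedMap _ h1
    have h3 : MulAction.orbit G y = (fun z : M => (z, y)) ⁻¹'
        ((fun p : G × M => (p.1 • p.2, p.2)) '' (univ ×ˢ ({y} : Set M))) := by
      ext z
      constructor
      · rintro ⟨g, rfl⟩
        exact ⟨(g, y), ⟨mem_univ _, rfl⟩, rfl⟩
      · rintro ⟨⟨g, w⟩, ⟨-, hw⟩, hz⟩
        rcases hw with rfl
        have : g • w = z := congrArg Prod.fst hz
        exact ⟨g, this⟩
    rw [h3]
    exact h2.preimage (continuous_id.prodMk continuous_const)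
  have hxorb : x ∉ MulAction.orbit G y := by
    rintro ⟨g, hg⟩
    exact hcon ⟨g⁻¹, by rw [← hg, inv_smul_smul]⟩
  -- a smooth bump function at `x` vanishing on the orbit of `y`
  obtain ⟨χ, -, hχsupp⟩ := (SmoothBumpFunction.nhds_basis_tsupport (I := J) x).mem_iff.mp
    (horb.isOpen_compl.mem_nhds hxorb)
  -- a right-invariant Haar measure on `G`
  set ν : MeasureTheory.Measure G := (MeasureTheory.Measure.haar (G := G)).inv with hν
  set f : M → ℝ := fun z => ∫ a, χ (a • z) ∂ν with hf
  -- integrability of the integrand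
  have hKz : ∀ z : M, IsCompact (Prod.fst ''
      ((fun p : G × M => (p.1 • p.2, p.2)) ⁻¹' (tsupport χ ×ˢ ({z} : Set M)))) := fun z =>
    (hproper.isCompact_preimage (χ.hasCompactSupport.prod isCompact_singleton)).image
      continuous_fst
  have hIntz : ∀ z : M, Integrable (fun a : G => χ (a • z)) ν := by
    intro z
    apply Continuous.integrable_of_hasCompactSupport
    · exact χ.continuous.comp (hcontAct.comp (continuous_id.prodMk continuous_const))
    · refine HasCompactSupport.intro (hKz z) fun a ha => ?_
      by_contra hne
      exact ha ⟨(a, z), ⟨subset_tsupport _ hne, rfl⟩, rfl⟩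
  -- invariance
  have hinv : ∀ (g : G) (z : M), f (g • z) = f z := by
    intro g z
    have h1 : (fun a : G => χ (a • g • z)) = fun a : G => χ ((a * g) • z) := by
      funext a; rw [smul_smul]
    rw [hf]
    simp only
    rw [h1]
    exact MeasureTheory.integral_mul_right_eq_self (fun a : G => χ (a • z)) g
  -- value at y
  have hfy : f y = 0 := by
    have h0 : ∀ a : G, χ (a • y) = 0 := fun a =>
      image_eq_zero_of_notMem_tsupport fun hmem => hχsupp hmem (MulAction.mem_orbit y a)
    simp [hf, h0]
  -- value at x
  have hfx : 0 < f x := by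
    rw [hf]
    refine (MeasureTheory.integral_pos_iff_support_of_nonneg (fun a => χ.nonneg) (hIntz x)).mpr ?_
    have hopen : IsOpen (support fun a : G => χ (a • x)) :=
      (χ.continuous.comp (hcontAct.comp (continuous_id.prodMk continuous_const))).isOpen_support
    refine hopen.measure_pos ν ⟨1, ?_⟩
    simp [χ.eq_one]
  -- smoothness
  have hfsm : ContMDiff J 𝓘(ℝ, ℝ) (⊤ : ℕ∞) f := by
    rw [contMDiff_infty]
    intro n z₀
    obtain ⟨V, hVcomp, hVmem⟩ := exists_compact_mem_nhds z₀
    have het : IsOpen (extChartAt J z₀).target := isOpen_extChartAt_target z₀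
    have hζ : ContMDiffOn 𝓘(ℝ, E') J (⊤ : ℕ∞) (extChartAt J z₀).symm (extChartAt J z₀).target :=
      contMDiffOn_extChartAt_symm z₀
    set s : Set E' := (extChartAt J z₀).target ∩ (extChartAt J z₀).symm ⁻¹' (interior V) with hsdef
    have hsopen : IsOpen s :=
      (continuousOn_extChartAt_symm z₀).isOpen_inter_preimage het isOpen_interior
    have hu₀ : extChartAt J z₀ z₀ ∈ s :=
      ⟨mem_extChartAt_target z₀, by
        rw [mem_preimage, extChartAt_to_inv]
        exact mem_interior_iff_mem_nhds.2 hVmem⟩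
    set K : Set G := Prod.fst ''
      ((fun p : G × M => (p.1 • p.2, p.2)) ⁻¹' (tsupport χ ×ˢ V)) with hKdef
    have hKcomp : IsCompact K :=
      (hproper.isCompact_preimage (χ.hasCompactSupport.prod hVcomp)).image continuous_fst
    set F : G → E' → ℝ := fun a u => χ (a • (extChartAt J z₀).symm u) with hFdef
    have hFsm : ContMDiffOn (I.prod 𝓘(ℝ, E')) 𝓘(ℝ, ℝ) (⊤ : ℕ∞) (uncurry F) (univ ×ˢ s) := by
      have h1 : ContMDiffOn (I.prod 𝓘(ℝ, E')) (I.prod J) (⊤ : ℕ∞)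
          (fun p : G × E' => (p.1, (extChartAt J z₀).symm p.2)) (univ ×ˢ s) := by
        refine ContMDiffOn.prodMk (contMDiff_fst.contMDiffOn) ?_
        exact hζ.comp (contMDiff_snd.contMDiffOn) fun p hp => hp.2.1
      have h2 := hsmooth.comp_contMDiffOn h1
      exact χ.contMDiff.comp_contMDiffOn h2
    have hFK : ∀ a ∉ K, ∀ u ∈ s, F a u = 0 := by
      intro a ha u hu
      by_contra hne
      exact ha ⟨(a, (extChartAt J z₀).symm u),
        ⟨subset_tsupport _ hne, interior_subset hu.2⟩, rfl⟩
    have hΦ := aux_contDiffOn_integral_real (μ := ν) n hsopen hKcomp (hFsm.of_le (WithTop.coe_le_coe.2 le_top)) hFK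
    have hΦat : ContMDiffAt 𝓘(ℝ, E') 𝓘(ℝ, ℝ) n (fun u => ∫ a, F a u ∂ν) (extChartAt J z₀ z₀) :=
      (hΦ.contDiffAt (hsopen.mem_nhds hu₀)).contMDiffAt
    have hcomp : ContMDiffAt J 𝓘(ℝ, ℝ) n ((fun u => ∫ a, F a u ∂ν) ∘ (extChartAt J z₀)) z₀ :=
      hΦat.comp z₀ contMDiffAt_extChartAt
    refine hcomp.congr_of_eventuallyEq ?_
    filter_upwards [extChartAt_source_mem_nhds (I := J) z₀] with z hz
    simp only [hf, comp_apply, hFdef, (extChartAt J z₀).left_inv hz]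
  have := hxy f hfsm hinv
  rw [hfy] at this
  exact absurd this (ne_of_gt hfx)
end

section
/- Let G be a finite-dimensional Lie group acting smoothly and properly on a finite-dimensional Hausdorff second-countable smooth manifold M without boundary. Let U ⊆ M be an open G-invariant subset (g·U = U for all g ∈ G) and let f : M → ℝ be a function that is smooth on U and satisfies f(g·x) = f(x) for all g ∈ G and x ∈ U. Then for every z ∈ U there exist an open G-invariant set V with z ∈ V ⊆ U and a smooth function F : M → ℝ with F(g·x) = F(x) for all g ∈ G and x ∈ M, such that F coincides with f on V. -/
open scoped Manifold ContDiff
open Set Function MeasureTheory Filter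

universe uF

section paramint
variable {Eα : Type*} [NormedAddCommGroup Eα] [NormedSpace ℝ Eα]
  {Hα : Type*} [TopologicalSpace Hα] {Iα : ModelWithCorners ℝ Eα Hα}
  {α : Type*} [TopologicalSpace α] [T2Space α] [ChartedSpace Hα α]
  [IsManifold Iα ∞ α]
  [MeasurableSpace α] [OpensMeasurableSpace α]
  {P : Type uF} [NormedAddCommGroup P] [NormedSpace ℝ P] [FiniteDimensional ℝ P]
  {μ : Measure α} {K : Set α} {s : Set P}

set_option linter.unusedSectionVars false

/-- Smoothness of the partial derivative in the second variable. -/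
theorem pfderiv_contMDiffOn (hs : IsOpen s) {F : Type uF} [NormedAddCommGroup F]
    [NormedSpace ℝ F] {k : α → P → F}
    (hk : ContMDiffOn (Iα.prod 𝓘(ℝ, P)) 𝓘(ℝ, F) ∞ (uncurry k) (univ ×ˢ s)) :
    ContMDiffOn (Iα.prod 𝓘(ℝ, P)) 𝓘(ℝ, P →L[ℝ] F) ∞
      (fun q : α × P => fderiv ℝ (k q.1) q.2) (univ ×ˢ s) := by
  have hopen : IsOpen ((univ : Set α) ×ˢ s) := isOpen_univ.prod hs
  intro q hq
  apply ContMDiffAt.contMDiffWithinAt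
  have h1 : ContMDiffAt ((Iα.prod 𝓘(ℝ, P)).prod 𝓘(ℝ, P)) 𝓘(ℝ, F) ∞
      (uncurry (fun (q : α × P) (p : P) => k q.1 p)) (q, q.2) := by
    have hproj : ContMDiff ((Iα.prod 𝓘(ℝ, P)).prod 𝓘(ℝ, P)) (Iα.prod 𝓘(ℝ, P)) ∞
        (fun r : (α × P) × P => (r.1.1, r.2)) :=
      (contMDiff_fst.comp contMDiff_fst).prodMk contMDiff_snd
    have : ContMDiffAt (Iα.prod 𝓘(ℝ, P)) 𝓘(ℝ, F) ∞ (uncurry k) (q.1, q.2) :=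
      hk.contMDiffAt (hopen.mem_nhds hq)
    exact ContMDiffAt.comp (I' := Iα.prod 𝓘(ℝ, P)) (q, q.2) this hproj.contMDiffAt
  have h2 : ContMDiffAt (Iα.prod 𝓘(ℝ, P)) 𝓘(ℝ, P) ∞ (fun q : α × P => q.2) q :=
    contMDiff_snd.contMDiffAt
  have h3 := h1.mfderiv (fun (q : α × P) (p : P) => k q.1 p) (fun q : α × P => q.2) h2
    (by simp)
  erw [inTangentCoordinates_model_space] at h3
  apply h3.congr_of_eventuallyEq
  filter_upwards with r
  rw [mfderiv_eq_fderiv]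

theorem paramint (hK : IsCompact K) (hμK : μ K < ⊤) (hs : IsOpen s) (n : ℕ) :
    ∀ (F : Type uF) [NormedAddCommGroup F] [NormedSpace ℝ F] [FiniteDimensional ℝ F]
      (k : α → P → F),
      ContMDiffOn (Iα.prod 𝓘(ℝ, P)) 𝓘(ℝ, F) ∞ (uncurry k) (univ ×ˢ s) →
      (∀ a ∉ K, ∀ p ∈ s, k a p = 0) →
      ContDiffOn ℝ n (fun p => ∫ a, k a p ∂μ) s := by
  have hopen : IsOpen ((univ : Set α) ×ˢ s) := isOpen_univ.prod hs
  induction n with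
  | zero =>
    intro F _ _ _ k hk hks
    refine contDiffOn_zero.2 (fun p₀ hp₀ => ContinuousAt.continuousWithinAt ?_)
    obtain ⟨ε, εpos, hball⟩ : ∃ ε > 0, Metric.closedBall p₀ ε ⊆ s := by
      obtain ⟨ε, εpos, hb⟩ := Metric.isOpen_iff.1 hs p₀ hp₀
      exact ⟨ε / 2, by linarith, (Metric.closedBall_subset_ball (by linarith)).trans hb⟩
    have hmeas : ∀ p ∈ s, AEStronglyMeasurable (fun a => k a p) μ := by
      intro p hp
      have : Continuous (fun a => k a p) := by
        rw [← continuousOn_univ]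
        exact hk.continuousOn.comp
          ((continuous_id.prodMk continuous_const).continuousOn)
          (fun a _ => ⟨trivial, hp⟩)
      exact this.aestronglyMeasurable
    obtain ⟨C, hC⟩ := (hK.prod (isCompact_closedBall p₀ ε)).exists_bound_of_continuousOn
      (hk.continuousOn.mono (prod_mono (subset_univ K) hball))
    apply continuousAt_of_dominated (bound := K.indicator (fun _ => C))
    · filter_upwards [hs.mem_nhds hp₀] with p hp using hmeas p hp
    · filter_upwards [Metric.closedBall_mem_nhds p₀ εpos] with p hp
      filter_upwards with a
      by_cases ha : a ∈ K
      · simpa [Set.indicator_of_mem ha] using hC (a, p) ⟨ha, hp⟩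
      · simp [Set.indicator_of_notMem ha, hks a ha p (hball hp)]
    · exact (integrable_indicator_iff hK.measurableSet).2
        (integrableOn_const hμK.ne)
    · filter_upwards with a
      have : ContinuousOn (fun p => k a p) s :=
        hk.continuousOn.comp ((continuous_const.prodMk continuous_id).continuousOn)
          (fun p hp => ⟨trivial, hp⟩)
      exact this.continuousAt (hs.mem_nhds hp₀)
  | succ n ih =>
    intro F _ _ _ k hk hks
    set Dk : α → P → P →L[ℝ] F := fun a p => fderiv ℝ (k a) p with hDkdef
    have hDk : ContMDiffOn (Iα.prod 𝓘(ℝ, P)) 𝓘(ℝ, P →L[ℝ] F) ∞ (uncurry Dk) (univ ×ˢ s) :=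
      pfderiv_contMDiffOn hs hk
    have hDks : ∀ a ∉ K, ∀ p ∈ s, Dk a p = 0 := by
      intro a ha p hp
      have h0 : (fun p => k a p) =ᶠ[nhds p] (fun _ => (0 : F)) :=
        eventually_of_mem (hs.mem_nhds hp) (fun q hq => hks a ha q hq)
      simp only [hDkdef]
      rw [h0.fderiv_eq, fderiv_const_apply]
    have hmeas : ∀ p ∈ s, AEStronglyMeasurable (fun a => k a p) μ := by
      intro p hp
      have : Continuous (fun a => k a p) := by
        rw [← continuousOn_univ]
        exact hk.continuousOn.comp
          ((continuous_id.prodMk continuous_const).continuousOn)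
          (fun a _ => ⟨trivial, hp⟩)
      exact this.aestronglyMeasurable
    have hDmeas : ∀ p ∈ s, AEStronglyMeasurable (fun a => Dk a p) μ := by
      intro p hp
      have : Continuous (fun a => Dk a p) := by
        rw [← continuousOn_univ]
        exact hDk.continuousOn.comp
          ((continuous_id.prodMk continuous_const).continuousOn)
          (fun a _ => ⟨trivial, hp⟩)
      exact this.aestronglyMeasurable
    have hkdiff : ∀ a, ∀ p ∈ s, HasFDerivAt (fun p => k a p) (Dk a p) p := by
      intro a p hp
      have hka : ContMDiffOn 𝓘(ℝ, P) 𝓘(ℝ, F) ∞ (fun p => k a p) s := by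
        intro q hq
        have := (hk (a, q) ⟨trivial, hq⟩).comp (f := fun p : P => (a, p)) q
          ((contMDiff_const.prodMk contMDiff_id).contMDiffAt.contMDiffWithinAt)
          (fun p hp => ⟨trivial, hp⟩)
        exact this
      have hcd : ContDiffOn ℝ ((⊤ : ℕ∞) : WithTop ℕ∞) (fun p => k a p) s :=
        contMDiffOn_iff_contDiffOn.1 hka
      have : DifferentiableAt ℝ (fun p => k a p) p :=
        (hcd.differentiableOn (by simp)).differentiableAt (hs.mem_nhds hp)
      exact this.hasFDerivAt
    have hint : ∀ p₀ ∈ s, Integrable (fun a => k a p₀) μ := by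
      intro p₀ hp₀
      obtain ⟨C, hC⟩ := (hK.prod (isCompact_singleton : IsCompact ({p₀} : Set P))).exists_bound_of_continuousOn
        (hk.continuousOn.mono (prod_mono (subset_univ K) (singleton_subset_iff.2 hp₀)))
      apply Integrable.mono' ((integrable_indicator_iff hK.measurableSet).2
        (integrableOn_const hμK.ne)) (hmeas p₀ hp₀)
      filter_upwards with a
      by_cases ha : a ∈ K
      · simpa [Set.indicator_of_mem ha] using hC (a, p₀) ⟨ha, rfl⟩
      · simp [Set.indicator_of_notMem ha, hks a ha p₀ hp₀]
    have hder : ∀ p₀ ∈ s, HasFDerivAt (fun p => ∫ a, k a p ∂μ) (∫ a, Dk a p₀ ∂μ) p₀ := by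
      intro p₀ hp₀
      obtain ⟨ε, εpos, hball⟩ : ∃ ε > 0, Metric.closedBall p₀ ε ⊆ s := by
        obtain ⟨ε, εpos, hb⟩ := Metric.isOpen_iff.1 hs p₀ hp₀
        exact ⟨ε / 2, by linarith, (Metric.closedBall_subset_ball (by linarith)).trans hb⟩
      obtain ⟨C, hC⟩ := (hK.prod (isCompact_closedBall p₀ ε)).exists_bound_of_continuousOn
        (hDk.continuousOn.mono (prod_mono (subset_univ K) hball))
      apply hasFDerivAt_integral_of_dominated_of_fderiv_le (F := fun p a => k a p)
        (F' := fun p a => Dk a p) (bound := K.indicator (fun _ => C)) (Metric.ball_mem_nhds p₀ εpos)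
      · filter_upwards [hs.mem_nhds hp₀] with p hp using hmeas p hp
      · exact hint p₀ hp₀
      · exact hDmeas p₀ hp₀
      · filter_upwards with a
        intro p hp
        by_cases ha : a ∈ K
        · simpa [Set.indicator_of_mem ha] using
            hC (a, p) ⟨ha, Metric.ball_subset_closedBall hp⟩
        · simp [Set.indicator_of_notMem ha,
            hDks a ha p (hball (Metric.ball_subset_closedBall hp))]
      · exact (integrable_indicator_iff hK.measurableSet).2
          (integrableOn_const hμK.ne)
      · filter_upwards with a
        intro p hp
        exact hkdiff a p (hball (Metric.ball_subset_closedBall hp))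
    have : ContDiffOn ℝ (n + 1 : ℕ) (fun p => ∫ a, k a p ∂μ) s := by
      rw [show ((n + 1 : ℕ) : WithTop ℕ∞) = (n : WithTop ℕ∞) + 1 by push_cast; ring]
      rw [contDiffOn_succ_iff_fderiv_of_isOpen hs]
      refine ⟨fun p hp => ((hder p hp).differentiableAt).differentiableWithinAt, by simp, ?_⟩
      have hIH := ih (P →L[ℝ] F) Dk hDk hDks
      apply hIH.congr
      intro p hp
      exact (hder p hp).fderiv
    exact this

end paramint

/-- Extension property for invariant functions of a proper smooth Lie group action: if
`U ⊆ M` is open and `G`-invariant and `f : M → ℝ` is smooth on `U` and `G`-invariant on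
`U`, then every `z ∈ U` has an open `G`-invariant neighborhood `V ⊆ U` on which `f`
coincides with a globally defined smooth `G`-invariant function `F : M → ℝ`. -/
theorem invariant_function_extension_property
    {E : Type*} [NormedAddCommGroup E] [NormedSpace ℝ E] [FiniteDimensional ℝ E]
    {H : Type*} [TopologicalSpace H] {I : ModelWithCorners ℝ E H} [I.Boundaryless]
    {G : Type*} [TopologicalSpace G] [ChartedSpace H G] [Group G] [LieGroup I (⊤ : ℕ∞) G]
    {E' : Type*} [NormedAddCommGroup E'] [NormedSpace ℝ E'] [FiniteDimensional ℝ E']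
    {H' : Type*} [TopologicalSpace H'] {J : ModelWithCorners ℝ E' H'} [J.Boundaryless]
    {M : Type*} [TopologicalSpace M] [T2Space M] [SecondCountableTopology M]
    [ChartedSpace H' M] [IsManifold J (⊤ : ℕ∞) M]
    [MulAction G M]
    (hsmooth : ContMDiff (I.prod J) J (⊤ : ℕ∞) (fun p : G × M => p.1 • p.2))
    (hproper : IsProperMap (fun p : G × M => (p.1 • p.2, p.2)))
    (U : Set M) (hUopen : IsOpen U) (hUinv : ∀ g : G, (fun x : M => g • x) '' U = U)
    (f : M → ℝ) (hfsmooth : ContMDiffOn J 𝓘(ℝ, ℝ) (⊤ : ℕ∞) f U)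
    (hfinv : ∀ (g : G), ∀ x ∈ U, f (g • x) = f x) :
    ∀ z ∈ U, ∃ V : Set M, IsOpen V ∧ z ∈ V ∧ V ⊆ U ∧
      (∀ g : G, (fun x : M => g • x) '' V = V) ∧
      ∃ F : M → ℝ, ContMDiff J 𝓘(ℝ, ℝ) (⊤ : ℕ∞) F ∧
        (∀ (g : G) (x : M), F (g • x) = F x) ∧ ∀ x ∈ V, F x = f x := by
  intro z hz
  -- basic topological facts
  haveI : IsTopologicalGroup G := topologicalGroup_of_lieGroup I ∞
  haveI : T1Space H := I.isClosedEmbedding.isEmbedding.t1Space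
  haveI : T1Space G := ChartedSpace.t1Space H G
  haveI : T2Space G := IsTopologicalGroup.t2Space_iff_one_closed.2 isClosed_singleton
  haveI : LocallyCompactSpace G := Manifold.locallyCompact_of_finiteDimensional I
  haveI : LocallyCompactSpace M := Manifold.locallyCompact_of_finiteDimensional J
  haveI : SigmaCompactSpace M := inferInstance
  borelize G
  set μ : Measure G := Measure.haar with hμdef
  have hactc : Continuous (fun p : G × M => p.1 • p.2) := hsmooth.continuous
  have hmemU : ∀ (g : G) {x : M}, x ∈ U → g • x ∈ U := by
    intro g x hx
    rw [← hUinv g]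
    exact mem_image_of_mem _ hx
  -- uniform compactness of the relevant group sets
  have hKsetc : ∀ (L : Set M) (C : Set M), IsCompact L → IsCompact C →
      IsCompact ((fun a : G => a⁻¹) ''
        (Prod.fst '' ((fun p : G × M => (p.1 • p.2, p.2)) ⁻¹' (L ×ˢ C)))) := by
    intro L C hL hC
    exact (((hproper.isCompact_preimage (hL.prod hC)).image continuous_fst).image
      continuous_inv)
  have hKsetm : ∀ (L : Set M) (C : Set M) (a : G),
      a ∉ ((fun a : G => a⁻¹) ''
        (Prod.fst '' ((fun p : G × M => (p.1 • p.2, p.2)) ⁻¹' (L ×ˢ C)))) →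
      ∀ y ∈ C, a⁻¹ • y ∉ L := by
    intro L C a ha y hy hmem
    apply ha
    refine ⟨a⁻¹, ⟨(a⁻¹, y), ?_, rfl⟩, inv_inv a⟩
    exact ⟨hmem, hy⟩
  -- averaging: invariance
  have hAvgInv : ∀ (ψ : M → ℝ) (g : G) (x : M),
      (∫ a, ψ (a⁻¹ • (g • x)) ∂μ) = ∫ a, ψ (a⁻¹ • x) ∂μ := by
    intro ψ g x
    have h := integral_mul_left_eq_self (μ := μ) (fun b => ψ (b⁻¹ • x)) g⁻¹
    rw [← h]
    congr 1
    funext a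
    simp [mul_inv_rev, mul_smul]
  -- averaging: integrability
  have hAvgInt : ∀ (ψ : M → ℝ), Continuous ψ → IsCompact (tsupport ψ) →
      ∀ x : M, Integrable (fun a => ψ (a⁻¹ • x)) μ := by
    intro ψ hψc hψs x
    have hcont : Continuous (fun a : G => ψ (a⁻¹ • x)) :=
      hψc.comp (hactc.comp (continuous_inv.prodMk continuous_const))
    refine hcont.integrable_of_hasCompactSupport ?_
    have hsub : support (fun a : G => ψ (a⁻¹ • x)) ⊆
        ((fun a : G => a⁻¹) ''
          (Prod.fst '' ((fun p : G × M => (p.1 • p.2, p.2)) ⁻¹' (tsupport ψ ×ˢ {x})))) := by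
      intro a ha
      by_contra hmem
      exact (hKsetm _ _ a hmem x rfl) (subset_tsupport ψ ha)
    exact IsCompact.of_isClosed_subset
      (hKsetc _ _ hψs isCompact_singleton) (isClosed_closure)
      (closure_minimal hsub (hKsetc _ _ hψs isCompact_singleton).isClosed)
  -- averaging: smoothness
  have hAvgSmooth : ∀ (ψ : M → ℝ), ContMDiff J 𝓘(ℝ, ℝ) ∞ ψ → IsCompact (tsupport ψ) →
      ContMDiff J 𝓘(ℝ, ℝ) ∞ (fun x => ∫ a, ψ (a⁻¹ • x) ∂μ) := by
    intro ψ hψ hψs x₀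
    set e := extChartAt J x₀ with he
    obtain ⟨C, hCc, hzC, hCU⟩ := exists_compact_subset isOpen_univ (mem_univ x₀)
    set s : Set E' := e.target ∩ e.symm ⁻¹' (interior C ∩ e.source) with hs
    have hsopen : IsOpen s :=
      (continuousOn_extChartAt_symm x₀).isOpen_inter_preimage (isOpen_extChartAt_target x₀)
        (isOpen_interior.inter (isOpen_extChartAt_source x₀))
    set K : Set G := ((fun a : G => a⁻¹) ''
      (Prod.fst '' ((fun p : G × M => (p.1 • p.2, p.2)) ⁻¹' (tsupport ψ ×ˢ C)))) with hK
    have hKc : IsCompact K := hKsetc _ _ hψs hCc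
    -- the local integrand
    set k : G → E' → ℝ := fun a p => ψ (a⁻¹ • e.symm p) with hk
    have hks : ∀ a ∉ K, ∀ p ∈ s, k a p = 0 := by
      intro a ha p hp
      have : e.symm p ∈ C := interior_subset hp.2.1
      have := hKsetm _ _ a ha (e.symm p) this
      exact image_eq_zero_of_notMem_tsupport (f := ψ) this
    have hkjoint : ContMDiffOn (I.prod 𝓘(ℝ, E')) 𝓘(ℝ, ℝ) ∞ (uncurry k) (univ ×ˢ s) := by
      have h1 : ContMDiffOn (I.prod 𝓘(ℝ, E')) (I.prod J) ∞
          (fun q : G × E' => (q.1⁻¹, e.symm q.2)) (univ ×ˢ s) := by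
        apply ContMDiffOn.prodMk
        · exact ((contMDiff_inv I ∞).comp contMDiff_fst).contMDiffOn
        · exact (contMDiffOn_extChartAt_symm x₀).comp contMDiff_snd.contMDiffOn
            (fun q hq => hq.2.1)
      exact (hψ.comp hsmooth).comp_contMDiffOn h1
    -- smoothness of the integral in the chart
    have hA : ∀ n : ℕ, ContDiffOn ℝ n (fun p => ∫ a, k a p ∂μ) s := by
      intro n
      -- go through `ULift ℝ` to equalize universes
      letI : NormedAddCommGroup (ULift.{u_4} ℝ) := ULift.normedAddCommGroup
      letI : NormedSpace ℝ (ULift.{u_4} ℝ) := ULift.normedSpace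
      haveI : FiniteDimensional ℝ (ULift.{u_4} ℝ) :=
        Module.Finite.equiv (ULift.moduleEquiv.symm)
      set L : ULift.{u_4} ℝ ≃L[ℝ] ℝ := ContinuousLinearEquiv.ulift with hLdef
      set k' : G → E' → ULift.{u_4} ℝ := fun a p => L.symm (k a p) with hk'
      have hk'joint : ContMDiffOn (I.prod 𝓘(ℝ, E')) 𝓘(ℝ, ULift.{u_4} ℝ) ∞
          (uncurry k') (univ ×ˢ s) :=
        (L.symm : ℝ →L[ℝ] ULift.{u_4} ℝ).contMDiff.comp_contMDiffOn hkjoint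
      have hk's : ∀ a ∉ K, ∀ p ∈ s, k' a p = 0 := by
        intro a ha p hp
        simp [hk', hks a ha p hp]
      have hA' := paramint (μ := μ) hKc hKc.measure_lt_top hsopen n
        (ULift.{u_4} ℝ) k' hk'joint hk's
      have : ContDiffOn ℝ n (fun p => L (∫ a, k' a p ∂μ)) s :=
        ((L : ULift.{u_4} ℝ →L[ℝ] ℝ).contDiff.comp_contDiffOn hA')
      apply this.congr
      intro p hp
      have hInt : Integrable (fun a => k a p) μ := hAvgInt ψ hψ.continuous hψs (e.symm p)
      have : Integrable (fun a => k' a p) μ :=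
        ((L.symm : ℝ →L[ℝ] ULift.{u_4} ℝ).integrable_comp hInt)
      have hcomm := ContinuousLinearMap.integral_comp_comm
        (L : ULift.{u_4} ℝ →L[ℝ] ℝ) this
      calc (∫ a, k a p ∂μ) = ∫ a, (L : ULift.{u_4} ℝ →L[ℝ] ℝ) (k' a p) ∂μ := by
            simp [hk']
        _ = L (∫ a, k' a p ∂μ) := by simpa using hcomm
    -- conclude smoothness at x₀
    have hAs : ContMDiffOn 𝓘(ℝ, E') 𝓘(ℝ, ℝ) ∞ (fun p => ∫ a, k a p ∂μ) s := by
      apply contMDiffOn_iff_contDiffOn.2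
      have hinf : ContDiffOn ℝ ∞ (fun p => ∫ a, k a p ∂μ) s := contDiffOn_infty.2 hA
      exact_mod_cast hinf
    have hx₀src : x₀ ∈ e.source := mem_extChartAt_source x₀
    have hx₀s : e x₀ ∈ s := by
      refine ⟨e.map_source hx₀src, ?_⟩
      rw [mem_preimage, e.left_inv hx₀src]
      exact ⟨hzC, hx₀src⟩
    have hAx : ContMDiffAt 𝓘(ℝ, E') 𝓘(ℝ, ℝ) ∞ (fun p => ∫ a, k a p ∂μ) (e x₀) :=
      hAs.contMDiffAt (hsopen.mem_nhds hx₀s)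
    have hee : ContMDiffAt J 𝓘(ℝ, E') ∞ e x₀ := contMDiffAt_extChartAt
    have hcomp := hAx.comp x₀ hee
    apply hcomp.congr_of_eventuallyEq
    have hW : (interior C ∩ e.source) ∈ nhds x₀ :=
      (isOpen_interior.inter (isOpen_extChartAt_source x₀)).mem_nhds ⟨hzC, hx₀src⟩
    filter_upwards [hW] with x hx
    have : e.symm (e x) = x := e.left_inv hx.2
    simp only [comp_apply, hk, this]
  -- bump function
  obtain ⟨K₁, hK₁c, hzK₁, hK₁U⟩ := exists_compact_subset hUopen hz
  obtain ⟨K₀, hK₀c, hzK₀, hK₀K₁⟩ := exists_compact_subset isOpen_interior hzK₁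
  obtain ⟨φ₀, hφ0, hφ1, hφ01⟩ := exists_contMDiffMap_zero_one_of_isClosed J (n := ⊤)
    (isOpen_interior.isClosed_compl) hK₀c.isClosed
    (disjoint_left.2 fun a ha hb => ha (hK₀K₁ hb))
  set φ : M → ℝ := ⇑φ₀ with hφdef
  have hφsm : ContMDiff J 𝓘(ℝ, ℝ) ∞ φ := φ₀.contMDiff
  have hφsupp : tsupport φ ⊆ K₁ := by
    have h1 : support φ ⊆ interior K₁ := by
      intro x hx
      by_contra hmem
      exact hx (hφ0 hmem)
    exact closure_minimal (h1.trans interior_subset) hK₁c.isClosed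
  have hφc : IsCompact (tsupport φ) :=
    hK₁c.of_isClosed_subset (isClosed_tsupport φ) hφsupp
  have hφU : tsupport φ ⊆ U := hφsupp.trans hK₁U
  have hφz : φ z = 1 := hφ1 (interior_subset hzK₀)
  have hφ0le : ∀ x, 0 ≤ φ x := fun x => (hφ01 x).1
  -- ψ = φ * f
  set ψ : M → ℝ := fun y => φ y * f y with hψdef
  have hψsm : ContMDiff J 𝓘(ℝ, ℝ) ∞ ψ := by
    intro x
    by_cases hx : x ∈ U
    · exact (hφsm x).mul (hfsmooth.contMDiffAt (hUopen.mem_nhds hx))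
    · have hx' : x ∈ (tsupport φ)ᶜ := fun hc => hx (hφU hc)
      apply ContMDiffAt.congr_of_eventuallyEq (contMDiffAt_const (c := (0 : ℝ)))
      filter_upwards [(isClosed_tsupport φ).isOpen_compl.mem_nhds hx'] with y hy
      simp [hψdef, image_eq_zero_of_notMem_tsupport (f := φ) hy]
  have hψc : IsCompact (tsupport ψ) := by
    apply hφc.of_isClosed_subset (isClosed_tsupport ψ)
    apply closure_minimal _ (isClosed_tsupport φ)
    intro x hx
    apply subset_tsupport φ
    intro h0
    exact hx (by simp [hψdef, h0])
  -- the averaged functions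
  set c : M → ℝ := fun x => ∫ a, φ (a⁻¹ • x) ∂μ with hcdef
  set F₀ : M → ℝ := fun x => ∫ a, ψ (a⁻¹ • x) ∂μ with hF₀def
  have hcsm : ContMDiff J 𝓘(ℝ, ℝ) ∞ c := hAvgSmooth φ hφsm hφc
  have hF₀sm : ContMDiff J 𝓘(ℝ, ℝ) ∞ F₀ := hAvgSmooth ψ hψsm hψc
  have hcinv : ∀ (g : G) (x : M), c (g • x) = c x := fun g x => hAvgInv φ g x
  have hF₀inv : ∀ (g : G) (x : M), F₀ (g • x) = F₀ x := fun g x => hAvgInv ψ g x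
  have hcpos : 0 < c z := by
    have hInt := hAvgInt φ hφsm.continuous hφc z
    rw [hcdef]
    rw [integral_pos_iff_support_of_nonneg (fun a => hφ0le _) hInt]
    have hopen : IsOpen (support fun a : G => φ (a⁻¹ • z)) := by
      have hcont : Continuous fun a : G => φ (a⁻¹ • z) :=
        hφsm.continuous.comp (hactc.comp (continuous_inv.prodMk continuous_const))
      exact isOpen_compl_singleton.preimage hcont
    apply hopen.measure_pos μ
    refine ⟨1, ?_⟩
    simp [mem_support, hφz]
  set δ : ℝ := c z / 2 with hδdef
  have hδpos : 0 < δ := by positivity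
  set V : Set M := c ⁻¹' (Ioi δ) with hVdef
  have hVopen : IsOpen V := isOpen_Ioi.preimage hcsm.continuous
  have hzV : z ∈ V := by
    show c z ∈ Ioi δ
    rw [mem_Ioi, hδdef]
    linarith
  have hVU : V ⊆ U := by
    intro x hx
    have hxV : δ < c x := hx
    have hne : c x ≠ 0 := ne_of_gt (hδpos.trans hxV)
    have hex : ∃ a : G, φ (a⁻¹ • x) ≠ 0 := by
      by_contra h
      push_neg at h
      apply hne
      rw [hcdef]
      simp only [h, integral_zero]
    obtain ⟨a, ha⟩ := hex
    have hmem : a⁻¹ • x ∈ U := hφU (subset_tsupport φ ha)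
    have := hmemU a hmem
    rwa [smul_inv_smul] at this
  have hVinv : ∀ g : G, (fun x : M => g • x) '' V = V := by
    intro g
    ext x
    constructor
    · rintro ⟨y, hy, rfl⟩
      show c (g • y) ∈ Ioi δ
      rw [hcinv]
      exact hy
    · intro hx
      refine ⟨g⁻¹ • x, ?_, smul_inv_smul g x⟩
      show c (g⁻¹ • x) ∈ Ioi δ
      have : c (g • (g⁻¹ • x)) = c (g⁻¹ • x) := hcinv g _
      rw [smul_inv_smul] at this
      rw [← this]
      exact hx
  have hF₀U : ∀ x ∈ U, F₀ x = c x * f x := by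
    intro x hx
    have hcongr : ∀ a : G, ψ (a⁻¹ • x) = φ (a⁻¹ • x) * f x := by
      intro a
      show φ (a⁻¹ • x) * f (a⁻¹ • x) = φ (a⁻¹ • x) * f x
      rw [hfinv a⁻¹ x hx]
    calc F₀ x = ∫ a, φ (a⁻¹ • x) * f x ∂μ := by
          rw [hF₀def]; simp only [hcongr]
      _ = (∫ a, φ (a⁻¹ • x) ∂μ) * f x := integral_mul_const _ _
      _ = c x * f x := rfl
  -- cutoff quotient
  set θ : ℝ → ℝ := fun t => Real.smoothTransition ((2 / δ) * t - 1) with hθdef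
  have hθsm : ContDiff ℝ ∞ θ :=
    Real.smoothTransition.contDiff.comp ((contDiff_const.mul contDiff_id).sub contDiff_const)
  have hθ1 : ∀ t, δ ≤ t → θ t = 1 := by
    intro t ht
    apply Real.smoothTransition.one_of_one_le
    rw [le_sub_iff_add_le]
    have h2 : (2 / δ) * δ = 2 := by field_simp
    calc (1 : ℝ) + 1 = 2 := by norm_num
      _ = (2 / δ) * δ := h2.symm
      _ ≤ (2 / δ) * t := mul_le_mul_of_nonneg_left ht (by positivity)
  have hθ0 : ∀ t, t < δ / 2 → θ t = 0 := by
    intro t ht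
    apply Real.smoothTransition.zero_of_nonpos
    rw [sub_nonpos]
    calc (2 / δ) * t ≤ (2 / δ) * (δ / 2) := mul_le_mul_of_nonneg_left ht.le (by positivity)
      _ = 1 := by field_simp
  set sfun : ℝ → ℝ := fun t => θ t / t with hsfundef
  have hsfunsm : ContDiff ℝ ∞ sfun := by
    rw [contDiff_iff_contDiffAt]
    intro t₀
    rcases eq_or_ne t₀ 0 with rfl | ht₀
    · apply ContDiffAt.congr_of_eventuallyEq (contDiffAt_const (c := (0 : ℝ)))
      filter_upwards [Iio_mem_nhds (half_pos hδpos)] with t ht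
      simp [hsfundef, hθ0 t ht]
    · exact (hθsm.contDiffAt).div contDiffAt_id ht₀
  have hsfun1 : ∀ t, δ < t → sfun t = 1 / t := by
    intro t ht
    rw [hsfundef]
    simp only
    rw [hθ1 t ht.le]
  -- conclusion
  refine ⟨V, hVopen, hzV, hVU, hVinv, fun x => sfun (c x) * F₀ x, ?_, ?_, ?_⟩
  · have h1 : ContMDiff J 𝓘(ℝ, ℝ) ∞ (fun x => sfun (c x)) := by
      have := hsfunsm.comp_contMDiff (I := J) hcsm
      exact_mod_cast this
    exact h1.mul hF₀sm
  · intro g x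
    simp only
    rw [hcinv, hF₀inv]
  · intro x hx
    have hxV : δ < c x := hx
    have hxU : x ∈ U := hVU hx
    have hne : c x ≠ 0 := ne_of_gt (hδpos.trans hxV)
    simp only
    rw [hF₀U x hxU, hsfun1 _ hxV]
    field_simp
end

section
/- Let M and N be finite-dimensional Hausdorff second-countable smooth manifolds without boundary and let π : M → N be a smooth surjective map whose differential is surjective at every point of M (a surjective submersion). Let U ⊆ M be an open subset that is saturated, i.e. U = π⁻¹(π(U)), and let f : M → ℝ be smooth on U and constant on the fibers of π inside U (for all x, y ∈ U, π(x) = π(y) implies f(x) = f(y)). Then for every z ∈ U there exist a saturated open set V with z ∈ V ⊆ U and a smooth function F : M → ℝ that is constant on every fiber of π (for all x, y ∈ M, π(x) = π(y) implies F(x) = F(y)) and satisfies F = f on V. -/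
open scoped Manifold

open Set Function Filter

section SectionLemma

variable
    {E : Type*} [NormedAddCommGroup E] [NormedSpace ℝ E] [FiniteDimensional ℝ E]
    {H : Type*} [TopologicalSpace H] {I : ModelWithCorners ℝ E H} [I.Boundaryless]
    {M : Type*} [TopologicalSpace M] [T2Space M] [SecondCountableTopology M]
    [ChartedSpace H M] [IsManifold I (⊤ : ℕ∞) M]
    {E' : Type*} [NormedAddCommGroup E'] [NormedSpace ℝ E'] [FiniteDimensional ℝ E']
    {H' : Type*} [TopologicalSpace H'] {J : ModelWithCorners ℝ E' H'} [J.Boundaryless]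
    {N : Type*} [TopologicalSpace N] [T2Space N] [SecondCountableTopology N]
    [ChartedSpace H' N] [IsManifold J (⊤ : ℕ∞) N]

/-- Local sections of a submersion through any given point. -/
theorem submersion_exists_local_section (π : M → N) (hπ : ContMDiff I J (⊤ : ℕ∞) π)
    (hπsub : ∀ m : M, Function.Surjective (mfderiv I J π m)) (m : M) :
    ∃ (W : Set N) (σ : N → M), IsOpen W ∧ π m ∈ W ∧ ContinuousOn σ W ∧
      ContMDiffAt J I (⊤ : ℕ∞) σ (π m) ∧ σ (π m) = m ∧ ∀ n ∈ W, π (σ n) = n := by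
  classical
  set φ := extChartAt I m with hφ
  set ψ := extChartAt J (π m) with hψ
  set x₀ : E := φ m with hx₀
  set p : E → E' := fun x => ψ (π (φ.symm x)) with hpdef
  -- p is smooth at x₀
  have hp : ContDiffAt ℝ (⊤ : ℕ∞) p x₀ := by
    have h1 := (contMDiffAt_iff.mp (hπ m)).2
    rw [I.range_eq_univ, contDiffWithinAt_univ] at h1
    exact h1
  -- the derivative of p at x₀ is the (surjective) mfderiv
  set D : E →L[ℝ] E' := mfderiv I J π m with hD
  have hDfd : HasFDerivAt p D x₀ := by
    have hmd : MDifferentiableAt I J π m := (hπ m).mdifferentiableAt (by simp)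
    have h2 := hmd.mfderiv
    rw [I.range_eq_univ, fderivWithin_univ] at h2
    have h3 : writtenInExtChartAt I J m π = p := rfl
    rw [h3] at h2
    have h4 : HasFDerivAt p (fderiv ℝ p x₀) x₀ :=
      (hp.differentiableAt (by simp)).hasFDerivAt
    rw [hD, h2]
    exact h4
  have hDsurj : Function.Surjective D := hπsub m
  -- choose a continuous linear right inverse of D
  obtain ⟨Rl, hRl⟩ := (D : E →ₗ[ℝ] E').exists_rightInverse_of_surjective
    (LinearMap.range_eq_top.2 hDsurj)
  set R : E' →L[ℝ] E := LinearMap.toContinuousLinearMap Rl with hRdef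
  have hDR : ∀ y, D (R y) = y := by
    intro y
    have := LinearMap.ext_iff.mp hRl y
    simpa [hRdef] using this
  -- the kernel of D and the range of R are complementary
  set K : Submodule ℝ E := LinearMap.ker (D : E →ₗ[ℝ] E') with hK
  set L : Submodule ℝ E := LinearMap.range (R : E' →ₗ[ℝ] E) with hL
  have hcompl : IsCompl K L := by
    constructor
    · rw [Submodule.disjoint_def]
      intro x hxK hxL
      obtain ⟨y, rfl⟩ := hxL
      have h0 : D (R y) = 0 := hxK
      rw [hDR y] at h0
      rw [h0, map_zero]
    · rw [codisjoint_iff, eq_top_iff]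
      rintro x -
      rw [Submodule.mem_sup]
      refine ⟨x - R (D x), ?_, R (D x), ⟨D x, rfl⟩, by abel⟩
      simp [hK, LinearMap.mem_ker, map_sub, hDR]
  -- projection onto the kernel
  set q : E →L[ℝ] K :=
    LinearMap.toContinuousLinearMap (K.linearProjOfIsCompl L hcompl) with hq
  have hqK : ∀ x : K, q (x : E) = x := by
    intro x; exact Submodule.linearProjOfIsCompl_apply_left hcompl x
  have hqL : ∀ x : E, x ∈ L → q x = 0 := by
    intro x hx
    exact Submodule.linearProjOfIsCompl_apply_right hcompl ⟨x, hx⟩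
  -- the map A = (D, q) is a continuous linear equivalence
  set A : E →L[ℝ] E' × K := D.prod q with hA
  have hAbij : Function.Bijective A := by
    constructor
    · intro a b hab
      simp only [hA, ContinuousLinearMap.prod_apply, Prod.mk.injEq] at hab
      have hKmem : a - b ∈ K := by
        simp [hK, LinearMap.mem_ker, map_sub, hab.1]
      have h1 : q (a - b) = (⟨a - b, hKmem⟩ : K) := hqK ⟨a - b, hKmem⟩
      have h2 : q (a - b) = 0 := by rw [map_sub, hab.2, sub_self]
      have : (⟨a - b, hKmem⟩ : K) = 0 := by rw [← h1, h2]
      have := congrArg (Subtype.val) this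
      simpa [sub_eq_zero] using this
    · rintro ⟨y, k⟩
      refine ⟨(k : E) + R (y - D (k : E)), ?_⟩
      have hDk : D ((k : E) + R (y - D (k : E))) = y := by
        rw [map_add, hDR]; abel
      have hqk : q ((k : E) + R (y - D (k : E))) = k := by
        rw [map_add, hqK k, hqL (R (y - D (k : E))) ⟨y - D (k : E), rfl⟩, add_zero]
      simp only [hA, ContinuousLinearMap.prod_apply, hDk, hqk]
  set eL : E ≃ₗ[ℝ] E' × K := LinearEquiv.ofBijective (A : E →ₗ[ℝ] E' × K) hAbij with heL
  set eA : E ≃L[ℝ] E' × K := eL.toContinuousLinearEquiv with heA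
  have hcoe : (eA : E →L[ℝ] E' × K) = A :=
    ContinuousLinearMap.ext fun x => congrFun (LinearEquiv.coe_toContinuousLinearEquiv' eL) x
  -- the chart-level map Φ and the inverse function theorem
  set Φ : E → E' × K := fun x => (p x, q x) with hΦdef
  have hΦ : ContDiffAt ℝ (⊤ : ℕ∞) Φ x₀ := hp.prodMk q.contDiff.contDiffAt
  have hΦ' : HasFDerivAt Φ (eA : E →L[ℝ] E' × K) x₀ := by
    rw [hcoe]; exact hDfd.prodMk q.hasFDerivAt
  have hone : ((⊤ : ℕ∞) : WithTop ℕ∞) ≠ 0 := by simp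
  set Ψ := hΦ.toOpenPartialHomeomorph Φ hΦ' hone with hΨ
  have hΨcoe : (Ψ : E → E' × K) = Φ := ContDiffAt.toOpenPartialHomeomorph_coe _ _ _
  have hx₀src : x₀ ∈ Ψ.source := hΦ.mem_toOpenPartialHomeomorph_source _ _
  have hΦx₀tgt : Φ x₀ ∈ Ψ.target := hΦ.image_mem_toOpenPartialHomeomorph_target _ _
  have hsymm : ContDiffAt ℝ (⊤ : ℕ∞) Ψ.symm (Φ x₀) := by
    have h := hΦ.to_localInverse (f' := eA) hΦ' hone
    have heq : hΦ.localInverse hΦ' hone = (Ψ.symm : E' × K → E) := rfl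
    rwa [heq] at h
  -- value of p at the center
  have hφm : φ.symm x₀ = m := extChartAt_to_inv m
  have hpx₀ : p x₀ = ψ (π m) := by
    show ψ (π (φ.symm x₀)) = ψ (π m)
    rw [hφm]
  have hΦx₀ : Φ x₀ = (ψ (π m), q x₀) := by
    show (p x₀, q x₀) = _
    rw [hpx₀]
  -- good open sets
  have hπcont : Continuous π := hπ.continuous
  set O : Set E := φ.target ∩ φ.symm ⁻¹' (π ⁻¹' ψ.source) with hO
  have hOopen : IsOpen O :=
    (continuousOn_extChartAt_symm m).isOpen_inter_preimage (isOpen_extChartAt_target m)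
      ((isOpen_extChartAt_source (π m)).preimage hπcont)
  have hx₀O : x₀ ∈ O := by
    refine ⟨mem_extChartAt_target m, ?_⟩
    show φ.symm x₀ ∈ π ⁻¹' ψ.source
    rw [hφm]
    exact mem_extChartAt_source (π m)
  set T : Set E' := {y : E' | (y, q x₀) ∈ Ψ.target ∩ Ψ.symm ⁻¹' O} with hT
  have hTopen : IsOpen T := by
    have h1 : IsOpen (Ψ.target ∩ Ψ.symm ⁻¹' O) :=
      Ψ.continuousOn_symm.isOpen_inter_preimage Ψ.open_target hOopen
    exact h1.preimage (continuous_id.prodMk continuous_const)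
  have hy₀T : ψ (π m) ∈ T := by
    show (ψ (π m), q x₀) ∈ Ψ.target ∩ Ψ.symm ⁻¹' O
    rw [← hΦx₀]
    refine ⟨hΦx₀tgt, ?_⟩
    have h2 : Ψ.symm (Ψ x₀) = x₀ := Ψ.left_inv hx₀src
    rw [hΨcoe] at h2
    show Ψ.symm (Φ x₀) ∈ O
    rw [h2]
    exact hx₀O
  set W : Set N := ψ.source ∩ ψ ⁻¹' T with hW
  have hWopen : IsOpen W :=
    (continuousOn_extChartAt (π m)).isOpen_inter_preimage (isOpen_extChartAt_source _) hTopen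
  have hmW : π m ∈ W := ⟨mem_extChartAt_source (π m), hy₀T⟩
  set σ : N → M := fun n => φ.symm (Ψ.symm (ψ n, q x₀)) with hσ
  have hkey : ∀ n ∈ W, (ψ n, q x₀) ∈ Ψ.target ∧ Ψ.symm (ψ n, q x₀) ∈ O ∧ π (σ n) = n := by
    intro n hn
    obtain ⟨hnsrc, hnT⟩ := hn
    have htgt : (ψ n, q x₀) ∈ Ψ.target := hnT.1
    have hsymO : Ψ.symm (ψ n, q x₀) ∈ O := hnT.2
    refine ⟨htgt, hsymO, ?_⟩
    set x := Ψ.symm (ψ n, q x₀) with hx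
    have hΦx : Φ x = (ψ n, q x₀) := by
      have h := Ψ.right_inv htgt
      rwa [hΨcoe] at h
    have hpx : ψ (π (φ.symm x)) = ψ n := congrArg Prod.fst hΦx
    have hmem : π (φ.symm x) ∈ ψ.source := hsymO.2
    have h6 := congrArg ψ.symm hpx
    rw [ψ.left_inv hmem, ψ.left_inv hnsrc] at h6
    exact h6
  have hσcont : ContinuousOn σ W := by
    have c2 : ContinuousOn (fun y : E' => Ψ.symm (y, q x₀)) T :=
      Ψ.continuousOn_symm.comp ((continuous_id.prodMk continuous_const).continuousOn)
        (fun y hy => hy.1)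
    have c23 : ContinuousOn (fun y : E' => φ.symm (Ψ.symm (y, q x₀))) T :=
      (continuousOn_extChartAt_symm m).comp c2 (fun y hy => hy.2.1)
    exact c23.comp ((continuousOn_extChartAt (π m)).mono inter_subset_left)
      (fun n hn => hn.2)
  have hvalx₀ : Ψ.symm (ψ (π m), q x₀) = x₀ := by
    have h2 : Ψ.symm (Ψ x₀) = x₀ := Ψ.left_inv hx₀src
    rw [hΨcoe] at h2
    rw [← hΦx₀]
    exact h2
  have hσsm : ContMDiffAt J I (⊤ : ℕ∞) σ (π m) := by
    have h1 : ContMDiffAt J 𝓘(ℝ, E') (⊤ : ℕ∞) ψ (π m) := contMDiffAt_extChartAt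
    have h2 : ContDiffAt ℝ (⊤ : ℕ∞) (fun y : E' => Ψ.symm (y, q x₀)) (ψ (π m)) := by
      have hpt : ContDiffAt ℝ (⊤ : ℕ∞) Ψ.symm ((ψ (π m), q x₀) : E' × K) := by
        rw [← hΦx₀]; exact hsymm
      exact hpt.comp (ψ (π m)) (contDiffAt_id.prodMk contDiffAt_const)
    have h2' : ContMDiffAt 𝓘(ℝ, E') 𝓘(ℝ, E) (⊤ : ℕ∞) (fun y : E' => Ψ.symm (y, q x₀)) (ψ (π m)) :=
      h2.contMDiffAt
    have h3 : ContMDiffAt 𝓘(ℝ, E) I (⊤ : ℕ∞) φ.symm ((fun y : E' => Ψ.symm (y, q x₀)) (ψ (π m))) := by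
      show ContMDiffAt 𝓘(ℝ, E) I (⊤ : ℕ∞) φ.symm (Ψ.symm (ψ (π m), q x₀))
      rw [hvalx₀]
      exact (contMDiffOn_extChartAt_symm m).contMDiffAt
        ((isOpen_extChartAt_target m).mem_nhds (mem_extChartAt_target m))
    exact (h3.comp (ψ (π m)) h2').comp (π m) h1
  have hσm : σ (π m) = m := by
    show φ.symm (Ψ.symm (ψ (π m), q x₀)) = m
    rw [hvalx₀]
    exact hφm
  exact ⟨W, σ, hWopen, hmW, hσcont, hσsm, hσm, fun n hn => (hkey n hn).2.2⟩

end SectionLemma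

/-- Extension property for the foliation given by the fibers of a surjective submersion
`π : M → N`: if `U ⊆ M` is open and saturated and `f : M → ℝ` is smooth on `U` and
constant on the fibers of `π` inside `U`, then every `z ∈ U` admits a saturated open
neighborhood `V ⊆ U` on which `f` coincides with a globally defined smooth function
`F : M → ℝ` that is constant on every fiber of `π`. -/
theorem submersion_fiber_constant_extension_property
    {E : Type*} [NormedAddCommGroup E] [NormedSpace ℝ E] [FiniteDimensional ℝ E]
    {H : Type*} [TopologicalSpace H] {I : ModelWithCorners ℝ E H} [I.Boundaryless]
    {M : Type*} [TopologicalSpace M] [T2Space M] [SecondCountableTopology M]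
    [ChartedSpace H M] [IsManifold I (⊤ : ℕ∞) M]
    {E' : Type*} [NormedAddCommGroup E'] [NormedSpace ℝ E'] [FiniteDimensional ℝ E']
    {H' : Type*} [TopologicalSpace H'] {J : ModelWithCorners ℝ E' H'} [J.Boundaryless]
    {N : Type*} [TopologicalSpace N] [T2Space N] [SecondCountableTopology N]
    [ChartedSpace H' N] [IsManifold J (⊤ : ℕ∞) N]
    (π : M → N) (hπ : ContMDiff I J (⊤ : ℕ∞) π) (hπsurj : Function.Surjective π)
    (hπsub : ∀ m : M, Function.Surjective (mfderiv I J π m))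
    (U : Set M) (hUopen : IsOpen U) (hUsat : U = π ⁻¹' (π '' U))
    (f : M → ℝ) (hfsmooth : ContMDiffOn I 𝓘(ℝ, ℝ) (⊤ : ℕ∞) f U)
    (hffib : ∀ x ∈ U, ∀ y ∈ U, π x = π y → f x = f y) :
    ∀ z ∈ U, ∃ V : Set M, IsOpen V ∧ z ∈ V ∧ V ⊆ U ∧ V = π ⁻¹' (π '' V) ∧
      ∃ F : M → ℝ, ContMDiff I 𝓘(ℝ, ℝ) (⊤ : ℕ∞) F ∧
        (∀ x y : M, π x = π y → F x = F y) ∧ ∀ x ∈ V, F x = f x := by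
  classical
  intro z hz
  -- a local section through z
  obtain ⟨W, σ, hWopen, hzW, hσcont, hσsm, hσz, hσsec⟩ :=
    submersion_exists_local_section π hπ hπsub z
  -- shrink so that the section lands in U
  set W₁ : Set N := W ∩ σ ⁻¹' U with hW₁
  have hW₁open : IsOpen W₁ := hσcont.isOpen_inter_preimage hWopen hUopen
  have hzW₁ : π z ∈ W₁ := ⟨hzW, by rw [mem_preimage, hσz]; exact hz⟩
  have hW₁sub : W₁ ⊆ W := inter_subset_left
  have hσU : ∀ n ∈ W₁, σ n ∈ U := fun n hn => hn.2
  -- the descended function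
  set g : N → ℝ := fun n => f (σ n) with hg
  have hgval : ∀ n ∈ W₁, ∀ x ∈ U, π x = n → g n = f x := by
    intro n hn x hx hπx
    exact (hffib x hx (σ n) (hσU n hn) (by rw [hπx, hσsec n (hW₁sub hn)])).symm
  -- g is smooth at every point of W₁
  have hgsm : ∀ n₁ ∈ W₁, ContMDiffAt J 𝓘(ℝ, ℝ) (⊤ : ℕ∞) g n₁ := by
    intro n₁ hn₁
    have hm₁U : σ n₁ ∈ U := hσU n₁ hn₁
    obtain ⟨W₂, σ₂, hW₂open, hm₂W₂, hσ₂cont, hσ₂sm, hσ₂val, hσ₂sec⟩ :=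
      submersion_exists_local_section π hπ hπsub (σ n₁)
    have hπm₁ : π (σ n₁) = n₁ := hσsec n₁ (hW₁sub hn₁)
    rw [hπm₁] at hm₂W₂ hσ₂sm hσ₂val
    set Ω : Set N := W₁ ∩ (W₂ ∩ σ₂ ⁻¹' U) with hΩ
    have hΩopen : IsOpen Ω :=
      hW₁open.inter (hσ₂cont.isOpen_inter_preimage hW₂open hUopen)
    have hn₁Ω : n₁ ∈ Ω := ⟨hn₁, hm₂W₂, by rw [mem_preimage, hσ₂val]; exact hm₁U⟩
    have heq : ∀ n ∈ Ω, g n = f (σ₂ n) := by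
      intro n hn
      exact hffib (σ n) (hσU n hn.1) (σ₂ n) hn.2.2
        (by rw [hσsec n (hW₁sub hn.1), hσ₂sec n hn.2.1])
    have hfs : ContMDiffAt J 𝓘(ℝ, ℝ) (⊤ : ℕ∞) (f ∘ σ₂) n₁ := by
      have hfa : ContMDiffAt I 𝓘(ℝ, ℝ) (⊤ : ℕ∞) f (σ₂ n₁) := by
        rw [hσ₂val]
        exact hfsmooth.contMDiffAt (hUopen.mem_nhds hm₁U)
      exact hfa.comp n₁ hσ₂sm
    refine hfs.congr_of_eventuallyEq ?_
    filter_upwards [hΩopen.mem_nhds hn₁Ω] with n hn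
    exact heq n hn
  -- a bump function on N supported in W₁
  haveI : LocallyCompactSpace N := Manifold.locallyCompact_of_finiteDimensional J
  obtain ⟨K₂, hK₂cpt, hzK₂, hK₂sub⟩ := exists_compact_subset hW₁open hzW₁
  obtain ⟨K₁, hK₁cpt, hzK₁, hK₁sub⟩ := exists_compact_subset isOpen_interior hzK₂
  obtain ⟨χ, hχ0, hχ1, -⟩ :=
    exists_contMDiffMap_zero_one_of_isClosed J (n := (⊤ : ℕ∞)) (isOpen_interior.isClosed_compl)
      (hK₁cpt.isClosed) (disjoint_compl_left.mono_right hK₁sub)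
  have hχsupp : tsupport (χ : N → ℝ) ⊆ W₁ := by
    refine (closure_minimal ?_ (hK₂cpt.isClosed)).trans hK₂sub
    intro n hn
    by_contra hnot
    exact hn (hχ0 (by simpa using fun h => hnot (interior_subset h)))
  -- the global function
  set G : N → ℝ := fun n => if n ∈ W₁ then χ n * g n else 0 with hG
  have hGsm : ContMDiff J 𝓘(ℝ, ℝ) (⊤ : ℕ∞) G := by
    intro n
    show ContMDiffAt J 𝓘(ℝ, ℝ) (⊤ : ℕ∞) G n
    by_cases hn : n ∈ W₁
    · have hmul : ContMDiffAt J 𝓘(ℝ, ℝ) (⊤ : ℕ∞) (fun n => χ n * g n) n :=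
        (χ.contMDiff n).mul (hgsm n hn)
      refine hmul.congr_of_eventuallyEq ?_
      filter_upwards [hW₁open.mem_nhds hn] with n' hn'
      simp [hG, hn']
    · have hns : n ∉ tsupport (χ : N → ℝ) := fun h => hn (hχsupp h)
      have hzero : ContMDiffAt J 𝓘(ℝ, ℝ) (⊤ : ℕ∞) (fun _ : N => (0 : ℝ)) n := contMDiffAt_const
      refine hzero.congr_of_eventuallyEq ?_
      filter_upwards [(isClosed_tsupport (χ : N → ℝ)).isOpen_compl.mem_nhds hns] with n' hn'
      have hχn' : (χ : N → ℝ) n' = 0 := image_eq_zero_of_notMem_tsupport hn'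
      by_cases h : n' ∈ W₁ <;> simp [hG, h, hχn']
  -- conclusion
  have hK₁W₁ : (K₁ : Set N) ⊆ W₁ := hK₁sub.trans (interior_subset.trans hK₂sub)
  refine ⟨π ⁻¹' interior K₁, isOpen_interior.preimage hπ.continuous, hzK₁, ?_, ?_,
    G ∘ π, hGsm.comp hπ, fun x y hxy => by simp [Function.comp, hxy], ?_⟩
  · -- V ⊆ U
    intro x hx
    have hπxW₁ : π x ∈ W₁ := hK₁W₁ (interior_subset hx)
    have : π x ∈ π '' U := ⟨σ (π x), hσU _ hπxW₁, hσsec _ (hW₁sub hπxW₁)⟩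
    rw [hUsat]
    exact this
  · -- saturation
    ext x
    constructor
    · intro hx
      exact ⟨x, hx, rfl⟩
    · rintro ⟨v, hv, hvx⟩
      show π x ∈ interior K₁
      rw [← hvx]
      exact hv
  · -- agreement with f
    intro x hx
    have hπxK₁ : π x ∈ K₁ := interior_subset hx
    have hπxW₁ : π x ∈ W₁ := hK₁W₁ hπxK₁
    have hxU : x ∈ U := by
      rw [hUsat]
      exact ⟨σ (π x), hσU _ hπxW₁, hσsec _ (hW₁sub hπxW₁)⟩
    have hχ1x : (χ : N → ℝ) (π x) = 1 := hχ1 hπxK₁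
    have : g (π x) = f x := hgval (π x) hπxW₁ x hxU rfl
    simp [Function.comp, hG, hπxW₁, hχ1x, this]
end

section
/- Let M be a Hausdorff smooth manifold without boundary modeled on a finite-dimensional real normed space, and let X be a smooth vector field on M (the assignment x ↦ X(x) ∈ T_xM is a smooth section of the tangent bundle). Suppose X has compact support, i.e. there exists a compact set C ⊆ M with X(x) = 0 for all x ∉ C. Then X is complete: for every x₀ ∈ M there exists a curve γ : ℝ → M with γ(0) = x₀ that is an integral curve of X defined for all time t ∈ ℝ. -/
open scoped Manifold Topology
open Set Function Metric

section Aux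

variable {E : Type*} [NormedAddCommGroup E] [NormedSpace ℝ E]

/-- Picard-Lindelöf solution that moreover stays in the closed ball. -/
lemma PicardLindelof.exists_solution_mem [CompleteSpace E] {f : ℝ → E → E} {tmin tmax : ℝ}
    {t₀ : Icc tmin tmax} {x₀ : E} {a L K : NNReal} (hf : IsPicardLindelof f t₀ x₀ a 0 L K) :
    ∃ α : ℝ → E, α t₀ = x₀ ∧ (∀ t : ℝ, α t ∈ closedBall x₀ a) ∧
      ∀ t ∈ Icc tmin tmax, HasDerivWithinAt α (f t (α t)) (Icc tmin tmax) t := by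
  obtain ⟨α, hα⟩ := ODE.FunSpace.exists_isFixedPt_next hf (mem_closedBall_self le_rfl)
  refine ⟨α.compProj, by rw [ODE.FunSpace.compProj_val, ← hα, ODE.FunSpace.next_apply₀],
    fun t ↦ α.compProj_mem_closedBall hf.mul_max_le, fun t ht ↦ ?_⟩
  apply ODE.hasDerivWithinAt_picard_Icc t₀.2 hf.continuousOn_uncurry
    α.continuous_compProj.continuousOn (fun _ ht' ↦ α.compProj_mem_closedBall hf.mul_max_le)
    x₀ ht |>.congr_of_mem _ ht
  intro t' ht'
  nth_rw 1 [← hα]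
  rw [ODE.FunSpace.compProj_of_mem ht', ODE.FunSpace.next_apply]

variable
  {H : Type*} [TopologicalSpace H] {I : ModelWithCorners ℝ E H}
  {M : Type*} [TopologicalSpace M] [ChartedSpace H M] [IsManifold I 1 M]
  {v : (x : M) → TangentSpace I x} {x₀ : M}

/-- Uniform-time local existence of integral curves: there is an `ε > 0` and a neighbourhood `U`
of `x₀` such that through each point of `U` there is an integral curve defined on
`Ioo (-ε) ε`. -/
theorem exists_nhds_isIntegralCurveOn [CompleteSpace E]
    (hv : ContMDiffAt I I.tangent 1 (fun x ↦ (⟨x, v x⟩ : TangentBundle I M)) x₀)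
    (hx : I.IsInteriorPoint x₀) :
    ∃ ε > (0 : ℝ), ∃ U ∈ 𝓝 x₀, ∀ y ∈ U,
      ∃ γ : ℝ → M, γ 0 = y ∧ IsMIntegralCurveOn γ v (Ioo (-ε) ε) := by
  have hI : range I ∈ 𝓝 (extChartAt I x₀ x₀) := range_mem_nhds_isInteriorPoint hx
  rw [contMDiffAt_iff] at hv
  obtain ⟨_, hv⟩ := hv
  set g : E → E := fun y ↦ ((extChartAt I.tangent (⟨x₀, v x₀⟩ : TangentBundle I M) ∘
    (fun x ↦ (⟨x, v x⟩ : TangentBundle I M)) ∘ (extChartAt I x₀).symm) y).2 with hg_def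
  have hg : ContDiffAt ℝ 1 g (extChartAt I x₀ x₀) := (hv.contDiffAt hI).snd
  set p₀ : E := extChartAt I x₀ x₀ with hp₀
  -- Lipschitz bound
  obtain ⟨L, s, hs, hlip⟩ := hg.exists_lipschitzOnWith
  obtain ⟨R₁, hR₁ : 0 < R₁, hball₁⟩ := Metric.mem_nhds_iff.mp hs
  -- norm bound
  obtain ⟨R₂, hR₂ : 0 < R₂, hbdd⟩ := Metric.continuousAt_iff.mp hg.continuousAt.norm 1 zero_lt_one
  have hbdd' : ∀ z ∈ ball p₀ R₂, ‖g z‖ ≤ 1 + ‖g p₀‖ := fun z hz ↦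
    sub_le_iff_le_add.mp <| le_of_lt <| lt_of_abs_lt <| Real.dist_eq _ _ ▸ hbdd hz
  -- stay inside the chart
  have hint : p₀ ∈ interior (extChartAt I x₀).target := (ModelWithCorners.isInteriorPoint_iff (I := I)).mp hx
  obtain ⟨R₃, hR₃ : 0 < R₃, hball₃⟩ := Metric.isOpen_iff.mp isOpen_interior p₀ hint
  set Rm : ℝ := min R₁ (min R₂ R₃) with hRm_def
  have hRm : 0 < Rm := lt_min hR₁ (lt_min hR₂ hR₃)
  set R : ℝ := Rm / 2 with hR_def
  have hR : 0 < R := by positivity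
  set Cb : ℝ := 1 + ‖g p₀‖ with hCb_def
  have hCb : 0 < Cb := by positivity
  set ε : ℝ := R / 2 / Cb with hε_def
  have hε : 0 < ε := by positivity
  refine ⟨ε, hε, (extChartAt I x₀).source ∩ extChartAt I x₀ ⁻¹' ball p₀ (R / 2),
    Filter.inter_mem (extChartAt_source_mem_nhds x₀)
      ((continuousAt_extChartAt x₀).preimage_mem_nhds (ball_mem_nhds _ (by positivity))), ?_⟩
  rintro y ⟨hysrc, hyball⟩
  set y' : E := extChartAt I x₀ y with hy'_def
  have hy' : y' ∈ ball p₀ (R / 2) := hyball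
  -- the closed ball around `y'` of radius `R/2` lies in all the good sets
  have hsub : closedBall y' (R / 2) ⊆ ball p₀ Rm := by
    intro z hz
    have h1 : dist z y' ≤ R / 2 := mem_closedBall.mp hz
    have h2 : dist y' p₀ < R / 2 := mem_ball.mp hy'
    have : dist z p₀ < R := by
      calc dist z p₀ ≤ dist z y' + dist y' p₀ := dist_triangle _ _ _
        _ < R / 2 + R / 2 := by linarith
        _ = R := by ring
    exact mem_ball.mpr (this.trans_le (by rw [hR_def]; linarith))
  have hsub₁ : closedBall y' (R / 2) ⊆ s :=
    hsub.trans <| (ball_subset_ball (min_le_left _ _)).trans hball₁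
  have hsub₂ : closedBall y' (R / 2) ⊆ ball p₀ R₂ :=
    hsub.trans <| ball_subset_ball <| (min_le_right _ _).trans (min_le_left _ _)
  have hsub₃ : closedBall y' (R / 2) ⊆ interior (extChartAt I x₀).target :=
    hsub.trans <| (ball_subset_ball <| (min_le_right _ _).trans (min_le_right _ _)).trans hball₃
  -- build the Picard-Lindelöf structure centred at `y'`
  have P : IsPicardLindelof (fun _ ↦ g) (tmin := -ε) (tmax := ε)
      ⟨0, by constructor <;> linarith⟩ y' ⟨R / 2, by positivity⟩ 0 ⟨Cb, hCb.le⟩ L :=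
    { lipschitzOnWith := fun t _ ↦ hlip.mono hsub₁
      continuousOn := fun z _ ↦ continuousOn_const
      norm_le := fun t _ z hz ↦ hbdd' z (hsub₂ hz)
      mul_max_le := by
        have : max (ε - 0) (0 - -ε) = ε := by
          rw [sub_zero, zero_sub, neg_neg, max_self]
        show Cb * max (ε - 0) (0 - -ε) ≤ R / 2 - ((0 : NNReal) : ℝ)
        rw [this, NNReal.coe_zero, sub_zero]
        rw [hε_def, mul_div_cancel₀ _ (ne_of_gt hCb)] }
  obtain ⟨f, hf0, hfmem, hfd⟩ := PicardLindelof.exists_solution_mem P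
  have hfmem' : ∀ t : ℝ, f t ∈ closedBall y' (R / 2) := hfmem
  have hf0' : f 0 = y' := hf0
  refine ⟨(extChartAt I x₀).symm ∘ f, ?_, ?_⟩
  · rw [comp_apply, hf0', hy'_def, PartialEquiv.left_inv _ hysrc]
  intro t ht
  -- the derivative statement in the chart
  have hf3 : f t ∈ interior (extChartAt I x₀).target := hsub₃ (hfmem' t)
  have hf3' : f t ∈ (extChartAt I x₀).target := interior_subset hf3
  set xₜ : M := (extChartAt I x₀).symm (f t) with hxₜ
  have h : HasDerivAt f (x := t) <| fderivWithin ℝ (extChartAt I x₀ ∘ (extChartAt I xₜ).symm)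
      (range I) (extChartAt I xₜ xₜ) (v xₜ) :=
    (hfd t (Ioo_subset_Icc_self ht)).hasDerivAt (Icc_mem_nhds ht.1 ht.2)
  rw [← tangentCoordChange_def] at h
  have hft1 := mem_preimage.mp <|
    mem_of_mem_of_subset hf3' (extChartAt I x₀).target_subset_preimage_source
  have hft2 := mem_extChartAt_source (I := I) xₜ
  apply HasMFDerivAt.hasMFDerivWithinAt
  refine ⟨(continuousAt_extChartAt_symm'' hf3').comp h.continuousAt,
    ?_⟩
  change HasFDerivWithinAt (𝕜 := ℝ) (E := ℝ) (F := E) _ (ContinuousLinearMap.toSpanSingleton ℝ (v xₜ)) _ _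
  refine HasDerivWithinAt.hasFDerivWithinAt ?_
  simp only [mfld_simps, hasDerivWithinAt_univ]
  apply HasDerivAt.hasDerivWithinAt
  show HasDerivAt ((extChartAt I xₜ ∘ (extChartAt I x₀).symm) ∘ f) (v xₜ) t
  rw [← tangentCoordChange_self (I := I) (x := xₜ) (z := xₜ) (v := v xₜ) hft2]
  refine HasDerivAt.congr_deriv ?_ (tangentCoordChange_comp (x := x₀) ⟨⟨hft2, hft1⟩, hft2⟩)
  apply HasFDerivAt.comp_hasDerivAt _ _ h
  apply HasFDerivWithinAt.hasFDerivAt (s := range I) _ <|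
    mem_nhds_iff.mpr ⟨interior (extChartAt I x₀).target,
      subset_trans interior_subset (extChartAt_target_subset_range ..),
      isOpen_interior, hf3⟩
  rw [← (extChartAt I x₀).right_inv hf3']
  exact hasFDerivWithinAt_tangentCoordChange ⟨hft1, hft2⟩

end Aux

/-- A smooth compactly supported vector field on a Hausdorff boundaryless manifold modeled
on a finite-dimensional real normed space is complete: through every point there passes an
integral curve defined for all time. -/
theorem exists_isIntegralCurve_of_compactlySupported
    {E : Type*} [NormedAddCommGroup E] [NormedSpace ℝ E] [FiniteDimensional ℝ E]
    {H : Type*} [TopologicalSpace H] {I : ModelWithCorners ℝ E H} [I.Boundaryless]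
    {M : Type*} [TopologicalSpace M] [T2Space M] [ChartedSpace H M]
    [IsManifold I (⊤ : ℕ∞) M]
    (X : (x : M) → TangentSpace I x)
    (hX : ContMDiff I I.tangent (⊤ : ℕ∞) (fun x : M => (⟨x, X x⟩ : TangentBundle I M)))
    (C : Set M) (hC : IsCompact C) (hsupp : ∀ x ∉ C, X x = 0) :
    ∀ x₀ : M, ∃ γ : ℝ → M, γ 0 = x₀ ∧ IsMIntegralCurve γ X := by
  have hX1 : ContMDiff I I.tangent 1 (fun x : M => (⟨x, X x⟩ : TangentBundle I M)) :=
    hX.of_le (by exact_mod_cast le_top)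
  -- local uniform-time existence at every point
  have key : ∀ p : M, ∃ ε > (0 : ℝ), ∃ U ∈ 𝓝 p, ∀ y ∈ U,
      ∃ γ : ℝ → M, γ 0 = y ∧ IsMIntegralCurveOn γ X (Ioo (-ε) ε) := fun p ↦
    exists_nhds_isIntegralCurveOn (hX1 p) (BoundarylessManifold.isInteriorPoint (I := I))
  choose ε hε U hU hcurve using key
  -- cover the compact support by finitely many such neighbourhoods
  obtain ⟨t, _, hcover⟩ := hC.elim_nhds_subcover U fun p _ ↦ hU p
  set ε₀ : ℝ := if h : t.Nonempty then min 1 (t.inf' h ε) else 1 with hε₀_def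
  have hε₀ : 0 < ε₀ := by
    rw [hε₀_def]
    split
    · rename_i h
      refine lt_min one_pos ?_
      obtain ⟨p, hp, hpe⟩ := Finset.exists_mem_eq_inf' h ε
      rw [hpe]; exact hε p
    · exact one_pos
  -- every point admits an integral curve on `Ioo (-ε₀) ε₀`
  have main : ∀ x : M, ∃ γ : ℝ → M, γ 0 = x ∧ IsMIntegralCurveOn γ X (Ioo (-ε₀) ε₀) := by
    intro x
    by_cases hx : x ∈ ⋃ p ∈ t, U p
    · simp only [mem_iUnion, exists_prop] at hx
      obtain ⟨p, hpt, hxp⟩ := hx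
      obtain ⟨γ, hγ0, hγ⟩ := hcurve p x hxp
      have hle : ε₀ ≤ ε p := by
        rw [hε₀_def, dif_pos ⟨p, hpt⟩]
        exact (min_le_right _ _).trans (Finset.inf'_le ε hpt)
      exact ⟨γ, hγ0, hγ.mono <| Ioo_subset_Ioo (neg_le_neg hle) hle⟩
    · -- `x` is outside the support: the constant curve works
      have hxC : x ∉ C := fun h ↦ hx (hcover h)
      refine ⟨fun _ ↦ x, rfl, fun s _ ↦ ?_⟩
      have h1 : X x = 0 := hsupp x hxC
      have h2 : ((1 : ℝ →L[ℝ] ℝ).smulRight (X x)) = 0 := by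
        rw [h1]; ext1; simp
      apply HasMFDerivAt.hasMFDerivWithinAt
      show HasMFDerivAt 𝓘(ℝ, ℝ) I (fun _ ↦ x) s ((1 : ℝ →L[ℝ] ℝ).smulRight (X x))
      rw [h2]
      exact hasMFDerivAt_const (I := 𝓘(ℝ, ℝ)) (I' := I) (c := x) (x := s)
  intro x₀
  exact exists_isMIntegralCurve_of_isMIntegralCurveOn hX1 hε₀ main x₀
end

section
/- Let M and N be finite-dimensional Hausdorff second-countable smooth manifolds without boundary, let π : M → N be a smooth map, and let m ∈ M be a point at which the differential T_mπ : T_mM → T_{π(m)}N is surjective. Then a covector α ∈ T*_mM vanishes on the kernel of T_mπ if and only if there exists a smooth function f : N → ℝ such that α equals the differential of f ∘ π at m. Equivalently, the annihilator of ker T_mπ equals {d(f ∘ π)(m) | f : N → ℝ smooth}. -/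
open scoped Manifold

/-- Let `π : M → N` be a smooth map between finite-dimensional Hausdorff second-countable
boundaryless manifolds whose differential at `m` is surjective. Then a covector
`α ∈ T*ₘM` vanishes on `ker (Tₘπ)` if and only if it is the differential at `m` of `f ∘ π`
for some smooth function `f : N → ℝ`. -/
theorem covector_vanishes_on_ker_iff_pullback
    {E : Type*} [NormedAddCommGroup E] [NormedSpace ℝ E] [FiniteDimensional ℝ E]
    {H : Type*} [TopologicalSpace H] {I : ModelWithCorners ℝ E H} [I.Boundaryless]
    {M : Type*} [TopologicalSpace M] [T2Space M] [SecondCountableTopology M]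
    [ChartedSpace H M] [IsManifold I (⊤ : ℕ∞) M]
    {E' : Type*} [NormedAddCommGroup E'] [NormedSpace ℝ E'] [FiniteDimensional ℝ E']
    {H' : Type*} [TopologicalSpace H'] {J : ModelWithCorners ℝ E' H'} [J.Boundaryless]
    {N : Type*} [TopologicalSpace N] [T2Space N] [SecondCountableTopology N]
    [ChartedSpace H' N] [IsManifold J (⊤ : ℕ∞) N]
    (π : M → N) (hπ : ContMDiff I J (⊤ : ℕ∞) π) (m : M)
    (hsurj : Function.Surjective (mfderiv I J π m))
    (α : TangentSpace I m →L[ℝ] ℝ) :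
    (∀ v : TangentSpace I m, mfderiv I J π m v = 0 → α v = 0) ↔
      ∃ f : N → ℝ, ContMDiff J 𝓘(ℝ, ℝ) (⊤ : ℕ∞) f ∧ α = mfderiv I 𝓘(ℝ, ℝ) (f ∘ π) m := by
  set c : N := π m with hc
  constructor
  · intro hker
    -- Step 1: factor `α` through `mfderiv I J π m`.
    haveI : FiniteDimensional ℝ (TangentSpace J c) := inferInstanceAs (FiniteDimensional ℝ E')
    haveI : T2Space (TangentSpace J c) := inferInstanceAs (T2Space E')
    obtain ⟨σ, hσ⟩ := (mfderiv I J π m).toLinearMap.exists_rightInverse_of_surjective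
      (LinearMap.range_eq_top.2 hsurj)
    set β : TangentSpace J c →L[ℝ] ℝ :=
      LinearMap.toContinuousLinearMap (α.toLinearMap.comp σ) with hβ
    have hfac : ∀ v : TangentSpace I m, α v = β (mfderiv I J π m v) := by
      intro v
      have h1 : mfderiv I J π m (v - σ (mfderiv I J π m v)) = 0 := by
        have := LinearMap.congr_fun hσ (mfderiv I J π m v)
        simp only [LinearMap.comp_apply, LinearMap.id_apply, ContinuousLinearMap.coe_coe] at this
        simp [map_sub, this]
      have h2 := hker _ h1
      have : α v - α (σ (mfderiv I J π m v)) = 0 := by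
        rw [← map_sub]; exact h2
      have h3 : α v = α (σ (mfderiv I J π m v)) := by linarith
      simpa [hβ, LinearMap.toContinuousLinearMap] using h3
    -- Step 2: construct a smooth `f : N → ℝ` whose differential at `c` is `β`.
    have hcs : c ∈ (chartAt H' c).source := mem_chart_source H' c
    set Lq := (mdifferentiable_chart (I := J) c).mfderiv hcs with hLq
    set A : E' →L[ℝ] ℝ := β.comp (Lq.symm : TangentSpace J (chartAt H' c c) →L[ℝ] TangentSpace J c)
      with hA
    set g : N → ℝ := fun y => A (extChartAt J c y) with hg
    have hgder : HasMFDerivAt J 𝓘(ℝ, ℝ) g c β := by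
      have h1 : HasMFDerivAt J 𝓘(ℝ, E') (extChartAt J c) c
          (mfderiv J J (chartAt H' c) c : _) := hasMFDerivAt_extChartAt hcs
      have h2 : HasMFDerivAt 𝓘(ℝ, E') 𝓘(ℝ, ℝ) A (extChartAt J c c) A := A.hasMFDerivAt
      have h3 := h2.comp c h1
      have heq : A.comp (mfderiv J J (chartAt H' c) c : TangentSpace J c →L[ℝ] _) = β := by
        ext v
        have : (mfderiv J J (chartAt H' c) c) v = Lq v := rfl
        simp only [ContinuousLinearMap.comp_apply, hA, ContinuousLinearEquiv.coe_coe]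
        exact congrArg β (Lq.symm_apply_apply v)
      exact heq ▸ h3
    obtain ⟨χ⟩ : Nonempty (SmoothBumpFunction J c) := inferInstance
    refine ⟨fun y => χ y • g y, ?_, ?_⟩
    · refine χ.contMDiff_smul ?_
      exact A.contDiff.contMDiff.comp_contMDiffOn contMDiffOn_extChartAt
    · have heq : (fun y => χ y • g y) =ᶠ[nhds c] g := by
        filter_upwards [χ.eventuallyEq_one] with y hy
        simp [hy]
      have hfder : HasMFDerivAt J 𝓘(ℝ, ℝ) (fun y => χ y • g y) c β :=
        hgder.congr_of_eventuallyEq heq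
      have hcomp : mfderiv I 𝓘(ℝ, ℝ) ((fun y => χ y • g y) ∘ π) m =
          (mfderiv J 𝓘(ℝ, ℝ) (fun y => χ y • g y) c).comp (mfderiv I J π m) :=
        mfderiv_comp m hfder.mdifferentiableAt (hπ.mdifferentiableAt (by simp))
      rw [hcomp, hfder.mfderiv]
      ext v
      exact hfac v
  · rintro ⟨f, hf, rfl⟩ v hv
    have hcomp : mfderiv I 𝓘(ℝ, ℝ) (f ∘ π) m =
        (mfderiv J 𝓘(ℝ, ℝ) f c).comp (mfderiv I J π m) :=
      mfderiv_comp m (hf.mdifferentiableAt (by simp)) (hπ.mdifferentiableAt (by simp))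
    have h4 : (mfderiv I 𝓘(ℝ, ℝ) (f ∘ π) m) v
        = (mfderiv J 𝓘(ℝ, ℝ) f c) (mfderiv I J π m v) := by rw [hcomp]; rfl
    have h5 : (mfderiv J 𝓘(ℝ, ℝ) f c) (mfderiv I J π m v) = 0 := by
      rw [hv]; exact map_zero _
    exact h4.trans h5
end
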